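/- Let X and Y be topological spaces, let π : X → Y be a continuous closed map, and let f : X → EReal be a lower semicontinuous function (with values in the extended real numbers). Define g : Y → EReal by g(y) = ⨅_{x ∈ π⁻¹(y)} f(x), where the infimum over an empty fiber is ⊤. Then g is lower semicontinuous. -/
import Mathlib


/-- If `π : X → Y` is a continuous closed map and `f : X → EReal` is
lower semicontinuous, then the fiberwise infimum
`g y = ⨅ x ∈ π⁻¹(y), f x` (which is `⊤` on empty fibers) is
lower semicontinuous. -/
theorem lsc_ereal_descends_along_closed_map
    {X Y : Type*} [TopologicalSpace X] [TopologicalSpace Y]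
    (π : X → Y) (hcont : Continuous π) (hclosed : IsClosedMap π)
    (f : X → EReal) (hf : LowerSemicontinuous f) :
    LowerSemicontinuous (fun y => ⨅ x ∈ π ⁻¹' {y}, f x) := by
  intro y c hc
  obtain ⟨c', hcc', hc'⟩ := exists_between hc
  set K : Set X := {x | f x ≤ c'} with hK
  have hKclosed : IsClosed K := by
    have := hf.isClosed_preimage c'
    exact this
  have hyU : y ∉ π '' K := by
    rintro ⟨x, hxK, rfl⟩
    have h2 : c' < ⨅ x' ∈ π ⁻¹' {π x}, f x' := hc'
    have h3 : (⨅ x' ∈ π ⁻¹' {π x}, f x') ≤ f x := biInf_le _ rfl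
    exact absurd (h3.trans hxK) (not_le.mpr h2)
  have hopen : IsOpen (π '' K)ᶜ := (hclosed K hKclosed).isOpen_compl
  filter_upwards [hopen.mem_nhds hyU] with z hz
  have : c' ≤ ⨅ x ∈ π ⁻¹' {z}, f x := by
    refine le_iInf fun x => le_iInf fun hx => ?_
    by_contra h
    exact hz ⟨x, show f x ≤ c' from (not_le.mp h).le, hx⟩
  exact lt_of_lt_of_le hcc' this
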